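/- Let Ψ be Pareto distributed with shape α > 2 and scale v = ((α−1)/α)·r, r > 0, and let c ≥ (α−1)/α. Then the expected energy E_exp = g·r + i·∫_v^{c·r} (c·r − ψ)·α·vᵃ/ψ^{α+1} dψ + i·(c·r − v)·0 equals [g + i·((α−1)^{α−1}·c·(α·c)^{−α} + c − 1)]·r. -/

import Mathlib

open Real intervalIntegral

/-- Expected energy consumption for Pareto-distributed query volumes with shape
α > 2, scale v = ((α−1)/α)·r, and idle threshold c·r ≥ v:
E_exp = g·r + i·∫_v^{c·r} (c·r − ψ)·α·vᵃ/ψ^{α+1} dψ + i·(c·r − v)·0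
      = [g + i·((α−1)^{α−1}·c·(α·c)^{−α} + c − 1)]·r. -/
theorem pareto_expected_energy (α r g i c : ℝ) (hα : 2 < α) (hr : 0 < r)
    (hg : 0 ≤ g) (hi : 0 ≤ i) (hc : (α - 1) / α ≤ c) :
    g * r + i * (∫ ψ in (((α - 1) / α) * r)..(c * r),
        (c * r - ψ) * (α * (((α - 1) / α) * r) ^ α / ψ ^ (α + 1)))
      + i * (c * r - ((α - 1) / α) * r) * 0 =
    (g + i * ((α - 1) ^ (α - 1) * c * (α * c) ^ (-α) + c - 1)) * r := by
  have hα0 : (0:ℝ) < α := by linarith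
  have hα1 : (0:ℝ) < α - 1 := by linarith
  set v : ℝ := ((α - 1) / α) * r with hvdef
  have hv : 0 < v := by positivity
  have hc0 : 0 < c := lt_of_lt_of_le (div_pos hα1 hα0) hc
  have hcr0 : 0 < c * r := mul_pos hc0 hr
  have hcr : v ≤ c * r := mul_le_mul_of_nonneg_right hc hr.le
  have h0not : (0:ℝ) ∉ Set.uIcc v (c * r) := by
    rw [Set.uIcc_of_le hcr]
    intro h
    exact absurd h.1 (not_le.mpr hv)
  -- rewrite the integrand
  have key : Set.EqOn (fun ψ : ℝ => (c * r - ψ) * (α * v ^ α / ψ ^ (α + 1)))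
      (fun ψ : ℝ => (c * r) * (α * v ^ α) * ψ ^ (-(α + 1)) - (α * v ^ α) * ψ ^ (-α))
      (Set.uIcc v (c * r)) := by
    intro ψ hψ
    have h1 : v ≤ ψ := by
      rw [Set.uIcc_of_le hcr] at hψ; exact hψ.1
    have hψ0 : 0 < ψ := lt_of_lt_of_le hv h1
    have fB : ψ ^ (-α) = ψ * ψ ^ (-(α + 1)) := by
      have h := Real.rpow_add hψ0 1 (-(α + 1))
      rw [show (1:ℝ) + -(α + 1) = -α by ring] at h
      rw [h, Real.rpow_one]
    simp only [fB, Real.rpow_neg hψ0.le (α + 1), div_eq_mul_inv]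
    ring
  rw [intervalIntegral.integral_congr key]
  have hi1 : IntervalIntegrable (fun ψ : ℝ => (c * r) * (α * v ^ α) * ψ ^ (-(α + 1)))
      MeasureTheory.volume v (c * r) :=
    (intervalIntegral.intervalIntegrable_rpow (Or.inr h0not)).const_mul _
  have hi2 : IntervalIntegrable (fun ψ : ℝ => (α * v ^ α) * ψ ^ (-α))
      MeasureTheory.volume v (c * r) :=
    (intervalIntegral.intervalIntegrable_rpow (Or.inr h0not)).const_mul _
  rw [intervalIntegral.integral_sub hi1 hi2, intervalIntegral.integral_const_mul,
    intervalIntegral.integral_const_mul,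
    integral_rpow (Or.inr ⟨by intro h; nlinarith [h], h0not⟩),
    integral_rpow (Or.inr ⟨by intro h; nlinarith [h], h0not⟩)]
  -- algebra with rpow facts
  set P : ℝ := ((α - 1) / (α * c)) ^ α with hPdef
  have hW : (v : ℝ) ^ α ≠ 0 := ne_of_gt (Real.rpow_pos_of_pos hv α)
  have hvcr : v / (c * r) = (α - 1) / (α * c) := by
    rw [hvdef]; field_simp
  have hX : v ^ α * (c * r) ^ (-α) = P := by
    rw [Real.rpow_neg hcr0.le, hPdef, ← hvcr, Real.div_rpow hv.le hcr0.le]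
    field_simp
  have e1 : (c * r) ^ (-α) = P / v ^ α := by
    rw [eq_div_iff hW]; linear_combination hX
  have e2 : v ^ (-α) = 1 / v ^ α := by
    rw [eq_div_iff hW, ← Real.rpow_add hv, show -α + α = 0 by ring, Real.rpow_zero]
  have e3 : (c * r) ^ (-α + 1) = P * (c * r) / v ^ α := by
    rw [eq_div_iff hW, Real.rpow_add hcr0, Real.rpow_one]
    linear_combination (c * r) * hX
  have e4 : v ^ (-α + 1) = v / v ^ α := by
    rw [eq_div_iff hW, ← Real.rpow_add hv, show -α + 1 + α = 1 by ring, Real.rpow_one]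
  have hP' : (α - 1) ^ (α - 1) * c * (α * c) ^ (-α) = P * c / (α - 1) := by
    have hac : 0 < α * c := mul_pos hα0 hc0
    have e : P = (α - 1) ^ α * ((α * c) ^ α)⁻¹ := by
      rw [hPdef, Real.div_rpow hα1.le hac.le]; ring
    have e2' := Real.rpow_add_one (ne_of_gt hα1) (α - 1)
    rw [show α - 1 + 1 = α by ring] at e2'
    rw [Real.rpow_neg hac.le, e, e2']
    field_simp
  rw [show -(α + 1) + 1 = -α by ring, e1, e2, e3, e4, hP', hvdef]
  have hαne : α ≠ 0 := ne_of_gt hα0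
  have hα1ne : α - 1 ≠ 0 := ne_of_gt hα1
  have hα1ne' : -α + 1 ≠ 0 := by intro h; nlinarith [h]
  field_simp
  ring
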